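/- Let p>0, μ>0 and λ≥0 with c := μ - (p^p/(p+1)^{p+1})λ > 0. If y:[0,T)→[0,1) is C^1 with y(0) ≥ 0 and satisfies y'(t) ≥ μ(1-y(t))^{-p} - λ y(t) for all t ∈ (0,T), then y'(t) ≥ c(1-y(t))^{-p} for all t ∈ (0,T). -/

import Mathlib

open Real

lemma key_ineq (p : ℝ) (hp : 0 < p) (u : ℝ) (hu0 : 0 ≤ u) (hu1 : u ≤ 1) :
    u * (1 - u) ^ p ≤ p ^ p / (p + 1) ^ (p + 1) := by
  have hp1 : (0:ℝ) < p + 1 := by linarith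
  have hv : 0 ≤ 1 - u := by linarith
  set A : ℝ := (p + 1) * u with hA
  set B : ℝ := (p + 1) * (1 - u) / p with hB
  have hA0 : 0 ≤ A := by positivity
  have hB0 : 0 ≤ B := by positivity
  have hw : 1 / (p + 1) + p / (p + 1) = 1 := by field_simp; ring
  have hgm := Real.geom_mean_le_arith_mean2_weighted
    (by positivity : (0:ℝ) ≤ 1 / (p + 1)) (by positivity : (0:ℝ) ≤ p / (p + 1)) hA0 hB0 hw
  have hsum : 1 / (p + 1) * A + p / (p + 1) * B = 1 := by
    field_simp [hA, hB]; rw [hA, hB, mul_div_assoc', mul_comm p, mul_div_assoc, div_self hp.ne', mul_one]; ring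
  rw [hsum] at hgm
  have h2 : (A ^ (1 / (p + 1)) * B ^ (p / (p + 1))) ^ (p + 1) ≤ 1 :=
    Real.rpow_le_one (by positivity) hgm (le_of_lt hp1)
  have h3 : (A ^ (1 / (p + 1)) * B ^ (p / (p + 1))) ^ (p + 1) = A * B ^ p := by
    rw [Real.mul_rpow (Real.rpow_nonneg hA0 _) (Real.rpow_nonneg hB0 _),
      ← Real.rpow_mul hA0, ← Real.rpow_mul hB0,
      one_div_mul_cancel hp1.ne', div_mul_cancel₀ _ hp1.ne', Real.rpow_one]
  rw [h3] at h2
  have hBp : B ^ p = (p + 1) ^ p * (1 - u) ^ p / p ^ p := by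
    rw [hB, Real.div_rpow (by positivity) hp.le, Real.mul_rpow (by positivity) hv]
  have hQ : (p + 1) ^ (p + 1) = (p + 1) ^ p * (p + 1) := by
    rw [Real.rpow_add_one hp1.ne' p]
  have hPpos : (0:ℝ) < p ^ p := Real.rpow_pos_of_pos hp p
  have hQppos : (0:ℝ) < (p + 1) ^ p := Real.rpow_pos_of_pos hp1 p
  rw [hA, hBp] at h2
  rw [hQ, le_div_iff₀ (by positivity)]
  have h2' : (p + 1) * u * ((p + 1) ^ p * (1 - u) ^ p / p ^ p) * p ^ p ≤ 1 * p ^ p :=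
    mul_le_mul_of_nonneg_right h2 hPpos.le
  have : (p + 1) * u * ((p + 1) ^ p * (1 - u) ^ p / p ^ p) * p ^ p
      = u * (1 - u) ^ p * ((p + 1) ^ p * (p + 1)) := by
    field_simp
  linarith [this ▸ h2']

theorem diff_ineq_improvement (p μ lam T : ℝ) (hp : 0 < p) (hμ : 0 < μ) (hlam : 0 ≤ lam)
    (c : ℝ) (hc : c = μ - (p ^ p / (p + 1) ^ (p + 1)) * lam) (hcpos : 0 < c)
    (y y' : ℝ → ℝ)
    (hrange : ∀ t ∈ Set.Ico (0 : ℝ) T, 0 ≤ y t ∧ y t < 1)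
    (hy0 : 0 ≤ y 0)
    (hderiv : ∀ t ∈ Set.Ioo (0 : ℝ) T, HasDerivAt y (y' t) t)
    (hineq : ∀ t ∈ Set.Ioo (0 : ℝ) T, y' t ≥ μ * (1 - y t) ^ (-p) - lam * y t) :
    ∀ t ∈ Set.Ioo (0 : ℝ) T, y' t ≥ c * (1 - y t) ^ (-p) := by
  intro t ht
  obtain ⟨hu0, hu1⟩ := hrange t ⟨le_of_lt ht.1, ht.2⟩
  set u := y t with hu
  have hv : (0:ℝ) < 1 - u := by linarith
  have hvp : (0:ℝ) < (1 - u) ^ p := Real.rpow_pos_of_pos hv p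
  have hneg : (1 - u) ^ (-p) = ((1 - u) ^ p)⁻¹ := Real.rpow_neg (le_of_lt hv) p
  have hkey := key_ineq p hp u hu0 (le_of_lt hu1)
  set K := p ^ p / (p + 1) ^ (p + 1) with hK
  have hKpos : 0 < K := by positivity
  -- u ≤ K * (1-u)^(-p)
  have h4 : u ≤ K * (1 - u) ^ (-p) := by
    rw [hneg, mul_comm, inv_mul_eq_div, le_div_iff₀ hvp]
    linarith [hkey]
  have h5 := hineq t ht
  have h6 : lam * u ≤ lam * (K * (1 - u) ^ (-p)) := mul_le_mul_of_nonneg_left h4 hlam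
  have : c * (1 - u) ^ (-p) = μ * (1 - u) ^ (-p) - lam * (K * (1 - u) ^ (-p)) := by
    rw [hc]; ring
  linarith
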